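/- Let (X, μ) be a measure space, h > 0 and M ≥ 0. Let φ, ψ : X → ℂ be measurable functions such that for every x ∈ X one has Im ψ(x) ≥ 0, Im(φ(x) − ψ(x)) ≥ 0 and |φ(x) − ψ(x)| ≤ M, and suppose the function x ↦ exp((i/h)·ψ(x)) lies in L²(μ). Then the function x ↦ exp((i/h)·φ(x)) also lies in L²(μ), and ‖exp((i/h)φ) − exp((i/h)ψ)‖_{L²(μ)} ≤ (M/h) · ‖exp((i/h)ψ)‖_{L²(μ)}. -/

import Mathlib

open MeasureTheory

lemma norm_exp_sub_one_le_of_re_nonpos {z : ℂ} (hz : z.re ≤ 0) :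
    ‖Complex.exp z - 1‖ ≤ ‖z‖ := by
  have hs : Convex ℝ {w : ℂ | w.re ≤ 0} := convex_halfSpace_re_le 0
  have := Convex.norm_image_sub_le_of_norm_hasDerivWithin_le
    (f := Complex.exp) (f' := Complex.exp) (s := {w : ℂ | w.re ≤ 0}) (C := 1)
    (fun w _ => (Complex.hasDerivAt_exp w).hasDerivWithinAt)
    (fun w hw => by
      rw [Complex.norm_exp]
      exact Real.exp_le_one_iff.mpr hw)
    hs (by simp : (0:ℂ) ∈ {w : ℂ | w.re ≤ 0}) hz
  simpa using this

/-- L² phase-comparison estimate: if `φ` is an `L^∞`-small perturbation (by at most `M`)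
of a phase `ψ` with the stated nonnegative imaginary part conditions, and
`x ↦ exp ((I/h) ψ x)` is in `L²(μ)`, then so is `x ↦ exp ((I/h) φ x)`, and the `L²`
distance between the two oscillatory functions is at most `(M/h)` times the `L²` norm of
`x ↦ exp ((I/h) ψ x)`. -/
theorem eLpNorm_exp_phase_perturbation {X : Type*} [MeasurableSpace X] (μ : Measure X)
    (h M : ℝ) (hh : 0 < h) (hM : 0 ≤ M) (φ ψ : X → ℂ)
    (hφmeas : Measurable φ) (hψmeas : Measurable ψ)
    (him : ∀ x, 0 ≤ (ψ x).im) (himd : ∀ x, 0 ≤ (φ x - ψ x).im)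
    (hbd : ∀ x, ‖φ x - ψ x‖ ≤ M)
    (hmem : MemLp (fun x => Complex.exp (Complex.I / (h : ℂ) * ψ x)) 2 μ) :
    MemLp (fun x => Complex.exp (Complex.I / (h : ℂ) * φ x)) 2 μ ∧
      eLpNorm (fun x => Complex.exp (Complex.I / (h : ℂ) * φ x) -
          Complex.exp (Complex.I / (h : ℂ) * ψ x)) 2 μ ≤
        ENNReal.ofReal (M / h) *
          eLpNorm (fun x => Complex.exp (Complex.I / (h : ℂ) * ψ x)) 2 μ := by
  have hre : ∀ z : ℂ, (Complex.I / (h : ℂ) * z).re = -z.im / h := by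
    intro z
    have : (Complex.I / (h : ℂ) * z) = Complex.I * z / h := by ring
    rw [this]
    field_simp [Complex.div_re, Complex.normSq_ofReal, Complex.ofReal_re, Complex.ofReal_im]
    rw [Complex.div_ofReal_re, Complex.I_mul_re]
    field_simp
  -- pointwise bound for the difference
  have key : ∀ x, ‖Complex.exp (Complex.I / (h : ℂ) * φ x) -
      Complex.exp (Complex.I / (h : ℂ) * ψ x)‖ ≤
      (M / h) * ‖Complex.exp (Complex.I / (h : ℂ) * ψ x)‖ := by
    intro x
    set z := Complex.I / (h : ℂ) * (φ x - ψ x) with hz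
    have hsplit : Complex.I / (h : ℂ) * φ x = Complex.I / (h : ℂ) * ψ x + z := by
      rw [hz]; ring
    have hzre : z.re ≤ 0 := by
      rw [hz, hre]
      exact div_nonpos_of_nonpos_of_nonneg (neg_nonpos.mpr (himd x)) hh.le
    have hznorm : ‖z‖ ≤ M / h := by
      rw [hz, norm_mul, norm_div, Complex.norm_I, Complex.norm_real,
        Real.norm_of_nonneg hh.le]
      rw [div_mul_eq_mul_div, one_mul]
      exact div_le_div_of_nonneg_right (hbd x) hh.le |>.trans_eq rfl
    calc ‖Complex.exp (Complex.I / (h : ℂ) * φ x) -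
        Complex.exp (Complex.I / (h : ℂ) * ψ x)‖
        = ‖Complex.exp (Complex.I / (h : ℂ) * ψ x)‖ * ‖Complex.exp z - 1‖ := by
          rw [hsplit, Complex.exp_add, ← norm_mul]; ring_nf
      _ ≤ ‖Complex.exp (Complex.I / (h : ℂ) * ψ x)‖ * (M / h) :=
          mul_le_mul_of_nonneg_left
            ((norm_exp_sub_one_le_of_re_nonpos hzre).trans hznorm) (norm_nonneg _)
      _ = (M / h) * ‖Complex.exp (Complex.I / (h : ℂ) * ψ x)‖ := mul_comm _ _
  -- pointwise domination for Memℒp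
  have hdom : ∀ x, ‖Complex.exp (Complex.I / (h : ℂ) * φ x)‖ ≤
      1 * ‖Complex.exp (Complex.I / (h : ℂ) * ψ x)‖ := by
    intro x
    rw [one_mul, Complex.norm_exp,
      Complex.norm_exp]
    apply Real.exp_le_exp.mpr
    rw [hre, hre]
    apply div_le_div_of_nonneg_right _ hh.le
    have := himd x
    simp only [Complex.sub_im] at this
    linarith
  have hmeasφ : AEStronglyMeasurable
      (fun x => Complex.exp (Complex.I / (h : ℂ) * φ x)) μ :=
    (Complex.measurable_exp.comp ((measurable_const.mul hφmeas))).aestronglyMeasurable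
  refine ⟨hmem.of_le_mul hmeasφ (Filter.Eventually.of_forall hdom), ?_⟩
  have := eLpNorm_le_nnreal_smul_eLpNorm_of_ae_le_mul (c := (M / h).toNNReal)
    (f := fun x => Complex.exp (Complex.I / (h : ℂ) * φ x) -
        Complex.exp (Complex.I / (h : ℂ) * ψ x))
    (g := fun x => Complex.exp (Complex.I / (h : ℂ) * ψ x))
    (Filter.Eventually.of_forall (fun x => by
      rw [← NNReal.coe_le_coe]
      push_cast [Real.coe_toNNReal _ (div_nonneg hM hh.le)]
      exact key x)) 2 (μ := μ)
  rw [ENNReal.ofReal]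
  simpa [ENNReal.smul_def] using this
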